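/- In the two-state risk-sensitive example with β > 1 and γ > 0, define v* : {1,2} → ℝ by v*(1) = 1/(1−β) and v*(2) = (2−β)/(1−β), and g* : {0,1} → ℝ by g*(0) = exp(−γβ/(1−β)) and g*(1) = exp(−γ/(1−β)). Then: (i) v*(x) equals the pointwise maximum over i ∈ {1,2,3,4} of the σ_i-value functions v_{σ_i}(x), and g*(a) equals the pointwise maximum over i of the refactored σ_i-value functions g_{σ_i}(a); (ii) S g* = g*; but (iii) (T v*)(1) = (2β − β²)/(1−β) ≠ v*(1), so T v* ≠ v*. -/

import Mathlib

/- Two-state risk-sensitive example: states `{1, 2}` are coded by `Fin 2`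
(index `x` codes state `x + 1`), actions `{0, 1}` by `Fin 2` (index = action).
Choosing action `a` in state `x` yields reward `x - a` and moves the state
deterministically to `a + 1` (coded by index `a`).  The aggregator is
`H(x, a, v) = x - a - (β/γ) log (exp (-γ v(a+1)))`. -/

/-- The `σ`-value equation `v(x) = x - σ(x) - (β/γ) log (exp (-γ v(σ(x)+1)))`. -/
def sigEq (β γ : ℝ) (σ : Fin 2 → Fin 2) (v : Fin 2 → ℝ) : Prop :=
  ∀ x : Fin 2,
    v x = ((x : ℕ) : ℝ) + 1 - ((σ x : ℕ) : ℝ)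
      - (β / γ) * Real.log (Real.exp (-γ * v (σ x)))

/-- The refactored `σ`-value equation
`g(a) = exp (-γ [(a+1) - σ(a+1) - (β/γ) log g(σ(a+1))])`. -/
noncomputable def refEq (β γ : ℝ) (σ : Fin 2 → Fin 2) (g : Fin 2 → ℝ) : Prop :=
  ∀ a : Fin 2,
    g a = Real.exp (-γ * (((a : ℕ) : ℝ) + 1 - ((σ a : ℕ) : ℝ)
      - (β / γ) * Real.log (g (σ a))))

/-- The Bellman operator `(TOp v)(x) = max {x + β v(1), x - 1 + β v(2)}`. -/
noncomputable def TOp (β : ℝ) (v : Fin 2 → ℝ) : Fin 2 → ℝ :=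
  fun x => max (((x : ℕ) : ℝ) + 1 + β * v 0) (((x : ℕ) : ℝ) + 1 - 1 + β * v 1)

/-- The refactored Bellman operator
`(S g)(a) = exp (-γ max_{a' ∈ {0,1}} {(a+1) - a' - (β/γ) log g(a')})`. -/
noncomputable def Sop (β γ : ℝ) (g : Fin 2 → ℝ) : Fin 2 → ℝ :=
  fun a => Real.exp (-γ * max
    (((a : ℕ) : ℝ) + 1 - 0 - (β / γ) * Real.log (g 0))
    (((a : ℕ) : ℝ) + 1 - 1 - (β / γ) * Real.log (g 1)))

lemma sig_lin {β γ : ℝ} (hγ : γ ≠ 0) {σ : Fin 2 → Fin 2} {v : Fin 2 → ℝ}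
    (h : sigEq β γ σ v) (x : Fin 2) :
    v x = ((x : ℕ) : ℝ) + 1 - ((σ x : ℕ) : ℝ) + β * v (σ x) := by
  have h1 := h x
  rw [Real.log_exp, show (β/γ) * (-γ * v (σ x)) = -(β * v (σ x)) by field_simp <;> ring] at h1
  linarith

lemma ref_lin {β γ : ℝ} (hγ : γ ≠ 0) {σ : Fin 2 → Fin 2} {g : Fin 2 → ℝ}
    (h : refEq β γ σ g) (a : Fin 2) :
    Real.log (g a) = -γ * (((a : ℕ) : ℝ) + 1 - ((σ a : ℕ) : ℝ)) + β * Real.log (g (σ a)) := by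
  conv_lhs => rw [h a]
  rw [Real.log_exp]
  field_simp
  ring


set_option maxHeartbeats 1000000 in
/-- Counterexample 2 (β > 1): `v*` and `g*` are the pointwise maxima of the
(refactored) `σ`-value functions and `S g* = g*`, yet
`(T v*)(1) = (2β - β²)/(1-β) ≠ v*(1)`, so `T v* ≠ v*`. -/
theorem stmt_18 (β γ : ℝ) (hβ1 : 1 < β) (hγ : 0 < γ)
    (vstar : Fin 2 → ℝ)
    (hvstar : vstar = ![1 / (1 - β), (2 - β) / (1 - β)])
    (gstar : Fin 2 → ℝ)
    (hgstar : gstar = ![Real.exp (-γ * β / (1 - β)), Real.exp (-γ / (1 - β))]) :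
    -- (i)
    (∀ v1 v2 v3 v4 : Fin 2 → ℝ,
      sigEq β γ ![0, 0] v1 → sigEq β γ ![0, 1] v2 →
      sigEq β γ ![1, 1] v3 → sigEq β γ ![1, 0] v4 →
      ∀ x, vstar x = max (max (v1 x) (v2 x)) (max (v3 x) (v4 x))) ∧
    (∀ g1 g2 g3 g4 : Fin 2 → ℝ,
      (∀ a, 0 < g1 a) → refEq β γ ![0, 0] g1 →
      (∀ a, 0 < g2 a) → refEq β γ ![0, 1] g2 →
      (∀ a, 0 < g3 a) → refEq β γ ![1, 1] g3 →
      (∀ a, 0 < g4 a) → refEq β γ ![1, 0] g4 →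
      ∀ a, gstar a = max (max (g1 a) (g2 a)) (max (g3 a) (g4 a))) ∧
    -- (ii)
    Sop β γ gstar = gstar ∧
    -- (iii)
    (TOp β vstar 0 = (2 * β - β ^ 2) / (1 - β) ∧
      TOp β vstar 0 ≠ vstar 0 ∧ TOp β vstar ≠ vstar) := by
  have hγ' : γ ≠ 0 := ne_of_gt hγ
  have hb : 1 - β < 0 := by linarith
  have hb' : (1:ℝ) - β ≠ 0 := ne_of_lt hb
  have hb2 : 1 - β^2 < 0 := by nlinarith
  have hb2' : (1:ℝ) - β^2 ≠ 0 := ne_of_lt hb2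
  subst hvstar hgstar
  refine ⟨?_, ?_, ?_, ?_, ?_, ?_⟩
  · -- (i) value functions
    intro v1 v2 v3 v4 h1 h2 h3 h4 x
    have e10 := sig_lin hγ' h1 0
    have e11 := sig_lin hγ' h1 1
    have e20 := sig_lin hγ' h2 0
    have e21 := sig_lin hγ' h2 1
    have e30 := sig_lin hγ' h3 0
    have e31 := sig_lin hγ' h3 1
    have e40 := sig_lin hγ' h4 0
    have e41 := sig_lin hγ' h4 1
    simp at e10 e11 e20 e21 e30 e31 e40 e41
    have w10 : v1 0 = 1/(1-β) := by field_simp; linear_combination e10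
    have w11 : v1 1 = (2-β)/(1-β) := by rw [e11, w10]; field_simp <;> ring
    have w20 : v2 0 = 1/(1-β) := by field_simp; linear_combination e20
    have w21 : v2 1 = 1/(1-β) := by field_simp; linear_combination e21
    have w31 : v3 1 = 1/(1-β) := by field_simp; linear_combination e31
    have w30 : v3 0 = β/(1-β) := by rw [e30, w31]; ring
    rw [e40] at e41
    have w41 : v4 1 = 2/(1-β^2) := by field_simp; linear_combination e41
    have w40 : v4 0 = 2*β/(1-β^2) := by rw [e40, w41]; ring
    fin_cases x <;> simp only [Fin.zero_eta, Fin.mk_one, Fin.isValue]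
    · simp only [Matrix.cons_val_zero]
      rw [w10, w20, w30, w40, max_self]
      have h3le : β/(1-β) ≤ 1/(1-β) := (div_le_div_right_of_neg hb).2 (le_of_lt hβ1)
      have hrw : (1:ℝ)/(1-β) = (1+β)/(1-β^2) := by rw [div_eq_div_iff hb' hb2']; ring
      have h4le : 2*β/(1-β^2) ≤ 1/(1-β) := by
        rw [hrw]; exact (div_le_div_right_of_neg hb2).2 (by linarith)
      exact (max_eq_left (max_le h3le h4le)).symm
    · simp only [Matrix.cons_val_one, Matrix.head_cons]
      rw [w11, w21, w31, w41]
      have h2le : 1/(1-β) ≤ (2-β)/(1-β) := (div_le_div_right_of_neg hb).2 (by linarith)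
      have hrw : (2-β)/(1-β) = (2+β-β^2)/(1-β^2) := by rw [div_eq_div_iff hb' hb2']; ring
      have h4le : 2/(1-β^2) ≤ (2-β)/(1-β) := by
        rw [hrw]; exact (div_le_div_right_of_neg hb2).2 (by nlinarith)
      rw [max_eq_left h2le]
      exact (max_eq_left (max_le h2le h4le)).symm
  · -- (i) refactored value functions
    intro g1 g2 g3 g4 hp1 h1 hp2 h2 hp3 h3 hp4 h4 a
    have e10 := ref_lin hγ' h1 0
    have e11 := ref_lin hγ' h1 1
    have e20 := ref_lin hγ' h2 0
    have e21 := ref_lin hγ' h2 1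
    have e30 := ref_lin hγ' h3 0
    have e31 := ref_lin hγ' h3 1
    have e40 := ref_lin hγ' h4 0
    have e41 := ref_lin hγ' h4 1
    simp at e10 e11 e20 e21 e30 e31 e40 e41
    have l10 : Real.log (g1 0) = -γ/(1-β) := by field_simp; linear_combination e10
    have l11 : Real.log (g1 1) = -γ*(2-β)/(1-β) := by
      rw [e11, l10]; field_simp <;> ring
    have l20 : Real.log (g2 0) = -γ/(1-β) := by field_simp; linear_combination e20
    have l21 : Real.log (g2 1) = -γ/(1-β) := by field_simp; linear_combination e21
    have l31 : Real.log (g3 1) = -γ/(1-β) := by field_simp; linear_combination e31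
    have l30 : Real.log (g3 0) = -γ*β/(1-β) := by rw [e30, l31]; ring
    rw [e40] at e41
    have l41 : Real.log (g4 1) = -2*γ/(1-β^2) := by field_simp; linear_combination e41
    have l40 : Real.log (g4 0) = -2*γ*β/(1-β^2) := by rw [e40, l41]; ring
    have G10 : g1 0 = Real.exp (-γ/(1-β)) := by rw [← l10, Real.exp_log (hp1 0)]
    have G11 : g1 1 = Real.exp (-γ*(2-β)/(1-β)) := by rw [← l11, Real.exp_log (hp1 1)]
    have G20 : g2 0 = Real.exp (-γ/(1-β)) := by rw [← l20, Real.exp_log (hp2 0)]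
    have G21 : g2 1 = Real.exp (-γ/(1-β)) := by rw [← l21, Real.exp_log (hp2 1)]
    have G30 : g3 0 = Real.exp (-γ*β/(1-β)) := by rw [← l30, Real.exp_log (hp3 0)]
    have G31 : g3 1 = Real.exp (-γ/(1-β)) := by rw [← l31, Real.exp_log (hp3 1)]
    have G40 : g4 0 = Real.exp (-2*γ*β/(1-β^2)) := by rw [← l40, Real.exp_log (hp4 0)]
    have G41 : g4 1 = Real.exp (-2*γ/(1-β^2)) := by rw [← l41, Real.exp_log (hp4 1)]
    fin_cases a <;> simp only [Fin.zero_eta, Fin.mk_one, Fin.isValue]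
    · simp only [Matrix.cons_val_zero]
      rw [G10, G20, G30, G40, max_self]
      have htT : Real.exp (-γ/(1-β)) ≤ Real.exp (-γ*β/(1-β)) := by
        apply Real.exp_le_exp.2
        exact (div_le_div_right_of_neg hb).2 (by nlinarith)
      have hrw : -γ*β/(1-β) = (-γ*β*(1+β))/(1-β^2) := by rw [div_eq_div_iff hb' hb2']; ring
      have hUT : Real.exp (-2*γ*β/(1-β^2)) ≤ Real.exp (-γ*β/(1-β)) := by
        apply Real.exp_le_exp.2
        rw [hrw]
        exact (div_le_div_right_of_neg hb2).2 (by nlinarith [mul_pos (mul_pos hγ (show (0:ℝ) < β by linarith)) (show (0:ℝ) < β - 1 by linarith)])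
      rw [max_eq_left hUT]
      exact (max_eq_right htT).symm
    · simp only [Matrix.cons_val_one, Matrix.head_cons, Matrix.cons_val_zero]
      rw [G11, G21, G31, G41]
      have h1le : Real.exp (-γ*(2-β)/(1-β)) ≤ Real.exp (-γ/(1-β)) := by
        apply Real.exp_le_exp.2
        exact (div_le_div_right_of_neg hb).2 (by nlinarith)
      have hrw : -γ/(1-β) = (-γ*(1+β))/(1-β^2) := by rw [div_eq_div_iff hb' hb2']; ring
      have h4le : Real.exp (-2*γ/(1-β^2)) ≤ Real.exp (-γ/(1-β)) := by
        apply Real.exp_le_exp.2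
        rw [hrw]; exact (div_le_div_right_of_neg hb2).2 (by nlinarith)
      rw [max_eq_right h1le, max_eq_left h4le, max_self]
  · -- (ii)
    funext a
    simp only [Sop, Matrix.cons_val_zero, Matrix.cons_val_one, Matrix.head_cons, Real.log_exp]
    have c1 : (β/γ) * (-γ * β / (1-β)) = -β^2/(1-β) := by field_simp <;> ring
    have c2 : (β/γ) * (-γ / (1-β)) = -β/(1-β) := by field_simp <;> ring
    rw [c1, c2]
    fin_cases a <;> simp only [Fin.zero_eta, Fin.mk_one, Fin.isValue]
    · simp only [Fin.val_zero, Nat.cast_zero, Matrix.cons_val_zero]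
      have hle : (0:ℝ) + 1 - 0 - -β^2/(1-β) ≤ 0 + 1 - 1 - -β/(1-β) := by
        have e1 : (0:ℝ) + 1 - 0 - -β^2/(1-β) = (1-β+β^2)/(1-β) := by field_simp <;> ring
        have e2 : (0:ℝ) + 1 - 1 - -β/(1-β) = β/(1-β) := by ring
        rw [e1, e2]
        exact (div_le_div_right_of_neg hb).2 (by nlinarith [sq_nonneg (1-β)])
      rw [max_eq_right hle]
      congr 1
      field_simp <;> ring
    · simp only [Fin.val_one, Nat.cast_one, Matrix.cons_val_one, Matrix.head_cons]
      have hle : (1:ℝ) + 1 - 0 - -β^2/(1-β) ≤ 1 + 1 - 1 - -β/(1-β) := by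
        have e1 : (1:ℝ) + 1 - 0 - -β^2/(1-β) = (2-2*β+β^2)/(1-β) := by field_simp <;> ring
        have e2 : (1:ℝ) + 1 - 1 - -β/(1-β) = (1-β+β)/(1-β) := by field_simp; ring
        rw [e1, e2]
        exact (div_le_div_right_of_neg hb).2 (by nlinarith [sq_nonneg (1-β)])
      rw [max_eq_right hle]
      congr 1
      field_simp <;> ring
  · -- (iii) first
    simp only [TOp, Matrix.cons_val_zero, Matrix.cons_val_one, Matrix.head_cons]
    have e1 : ((0:Fin 2):ℕ) = 0 := rfl
    have hle : ((((0:Fin 2):ℕ)):ℝ) + 1 + β * (1/(1-β)) ≤ (((0:Fin 2):ℕ):ℝ) + 1 - 1 + β * ((2-β)/(1-β)) := by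
      rw [e1]
      have q1 : ((0:ℕ):ℝ) + 1 + β * (1/(1-β)) = (1-β+β)/(1-β) := by push_cast; field_simp <;> ring
      have q2 : ((0:ℕ):ℝ) + 1 - 1 + β * ((2-β)/(1-β)) = (2*β-β^2)/(1-β) := by
        field_simp <;> ring
      rw [q1, q2]
      exact (div_le_div_right_of_neg hb).2 (by nlinarith [sq_nonneg (1-β)])
    rw [max_eq_right hle, e1]
    push_cast
    field_simp
    ring
  · -- (iii) second
    intro h
    simp only [TOp, Matrix.cons_val_zero, Matrix.cons_val_one, Matrix.head_cons] at h
    have hle : ((((0:Fin 2):ℕ)):ℝ) + 1 + β * (1/(1-β)) ≤ (((0:Fin 2):ℕ):ℝ) + 1 - 1 + β * ((2-β)/(1-β)) := by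
      have q1 : (((0:Fin 2):ℕ):ℝ) + 1 + β * (1/(1-β)) = (1-β+β)/(1-β) := by
        push_cast [Fin.val_zero]; field_simp <;> ring
      have q2 : (((0:Fin 2):ℕ):ℝ) + 1 - 1 + β * ((2-β)/(1-β)) = (2*β-β^2)/(1-β) := by
        push_cast [Fin.val_zero]; field_simp <;> ring
      rw [q1, q2]
      exact (div_le_div_right_of_neg hb).2 (by nlinarith [sq_nonneg (1-β)])
    rw [max_eq_right hle] at h
    have h' : (2*β-β^2) * (1-β) = 1 * (1-β) := by
      have : (((0:Fin 2):ℕ):ℝ) + 1 - 1 + β * ((2-β)/(1-β)) = (2*β-β^2)/(1-β) := by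
        push_cast [Fin.val_zero]; field_simp <;> ring
      rw [this] at h
      rw [div_eq_div_iff hb' hb'] at h
      linarith [h]
    have : 2*β - β^2 = 1 := mul_right_cancel₀ hb' h'
    nlinarith [sq_nonneg (β-1)]
  · -- (iii) third
    intro h
    have h0 := congrFun h 0
    simp only [TOp, Matrix.cons_val_zero, Matrix.cons_val_one, Matrix.head_cons] at h0
    have hle : ((((0:Fin 2):ℕ)):ℝ) + 1 + β * (1/(1-β)) ≤ (((0:Fin 2):ℕ):ℝ) + 1 - 1 + β * ((2-β)/(1-β)) := by
      have q1 : (((0:Fin 2):ℕ):ℝ) + 1 + β * (1/(1-β)) = (1-β+β)/(1-β) := by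
        push_cast [Fin.val_zero]; field_simp <;> ring
      have q2 : (((0:Fin 2):ℕ):ℝ) + 1 - 1 + β * ((2-β)/(1-β)) = (2*β-β^2)/(1-β) := by
        push_cast [Fin.val_zero]; field_simp <;> ring
      rw [q1, q2]
      exact (div_le_div_right_of_neg hb).2 (by nlinarith [sq_nonneg (1-β)])
    rw [max_eq_right hle] at h0
    have h' : (2*β-β^2) * (1-β) = 1 * (1-β) := by
      have : (((0:Fin 2):ℕ):ℝ) + 1 - 1 + β * ((2-β)/(1-β)) = (2*β-β^2)/(1-β) := by
        push_cast [Fin.val_zero]; field_simp <;> ring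
      rw [this] at h0
      rw [div_eq_div_iff hb' hb'] at h0
      linarith [h0]
    have : 2*β - β^2 = 1 := mul_right_cancel₀ hb' h'
    nlinarith [sq_nonneg (β-1)]
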